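/- Let ℓ be a prime and let (F_n, f_n) be an ℓ-adic system of ℤ_ℓ-modules, with inverse limit M = lim F_n. Then for every n the canonical projection M → F_n is surjective with kernel equal to ℓ^{n+1}·M; consequently it induces an isomorphism M/ℓ^{n+1}M ≅ F_n, and these isomorphisms commute with the transition maps (on the source, with the quotient maps M/ℓ^{n+2}M → M/ℓ^{n+1}M). -/

import Mathlib

open Pointwise CategoryTheory

/-- The inverse limit of an inverse system of `R`-modules indexed by `ℕ`, realized as the
submodule of the product consisting of the compatible families. -/
def invLimit {R : Type*} [CommRing R] (F : ℕ → Type*) [∀ n, AddCommGroup (F n)]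
    [∀ n, Module R (F n)] (f : ∀ n, F (n + 1) →ₗ[R] F n) :
    Submodule R (∀ n, F n) where
  carrier := {x | ∀ n, f n (x (n + 1)) = x n}
  add_mem' {x y} hx hy n := by simp [map_add, hx n, hy n]
  zero_mem' n := by simp
  smul_mem' r x hx n := by simp [map_smul, hx n]

/-- The canonical projection `lim F → F n` from the inverse limit of an inverse system. -/
def invLimitProj {R : Type*} [CommRing R] (F : ℕ → Type*) [∀ n, AddCommGroup (F n)]
    [∀ n, Module R (F n)] (f : ∀ n, F (n + 1) →ₗ[R] F n) (n : ℕ) :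
    invLimit F f →ₗ[R] F n :=
  (LinearMap.proj n).comp (invLimit F f).subtype

/- ### Auxiliary material -/


theorem mem_smul_top_iff' {R M : Type*} [CommRing R] [AddCommGroup M] [Module R M] (a : R)
    (x : M) : x ∈ a • (⊤ : Submodule R M) ↔ ∃ s, a • s = x := by
  constructor
  · intro h
    rw [← SetLike.mem_coe, Submodule.coe_pointwise_smul] at h
    obtain ⟨s, -, rfl⟩ := h
    exact ⟨s, rfl⟩
  · rintro ⟨s, rfl⟩
    exact Submodule.smul_mem_pointwise_smul _ _ _ Submodule.mem_top

/-- A simple module over `ℤ_ℓ` is finite. -/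
theorem padicSimpleFinite (ℓ : ℕ) [Fact (Nat.Prime ℓ)] (Q : Type*) [AddCommGroup Q]
    [Module (PadicInt ℓ) Q] (hs : IsSimpleModule (PadicInt ℓ) Q) : Finite Q := by
  obtain ⟨I, hI, ⟨e⟩⟩ := (isSimpleModule_iff_quot_maximal).mp hs
  have hmax : I = IsLocalRing.maximalIdeal (PadicInt ℓ) := IsLocalRing.eq_maximalIdeal hI
  have hk : I = RingHom.ker (PadicInt.toZMod (p := ℓ)) := by rw [hmax, PadicInt.ker_toZMod]
  subst hk
  have : Finite (PadicInt ℓ ⧸ RingHom.ker (PadicInt.toZMod (p := ℓ))) := by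
    have hsur := ZMod.ringHom_surjective (PadicInt.toZMod (p := ℓ))
    exact Finite.of_equiv _ (RingHom.quotientKerEquivOfSurjective hsur).symm.toEquiv
  exact Finite.of_equiv _ e.symm.toEquiv

universe u in
/-- A finite-length module over a ring all of whose simple modules are finite is finite. -/
theorem finite_of_isFiniteLength' {R : Type*} [CommRing R]
    (hQ : ∀ (Q : Type u) [AddCommGroup Q] [Module R Q], IsSimpleModule R Q → Finite Q)
    {M : Type u} [AddCommGroup M] [Module R M] (h : IsFiniteLength R M) : Finite M := by
  induction h with
  | of_subsingleton => exact Finite.of_subsingleton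
  | @of_simple_quotient M _ _ N _ _ ih =>
    have h1 : Finite (M ⧸ N) := hQ _ ‹_›
    have h2 : Finite N.toAddSubgroup := ih
    have h3 : Finite (M ⧸ N.toAddSubgroup) := h1
    exact Finite.of_addSubgroup_quotient (H := N.toAddSubgroup)

section
variable {R : Type*} [CommRing R] {F : ℕ → Type*} [∀ n, AddCommGroup (F n)]
    [∀ n, Module R (F n)] (f : ∀ n, F (n + 1) →ₗ[R] F n)

/-- Composite of the transition maps from level `m` down to level `n`. -/
noncomputable def invDown : ∀ {n m : ℕ}, n ≤ m → (F m →ₗ[R] F n) :=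
  fun {n _} h => Nat.leRec (motive := fun m _ => F m →ₗ[R] F n) LinearMap.id
    (fun k _ g => g.comp (f k)) h

theorem invDown_refl {n : ℕ} (h : n ≤ n) : invDown f h = LinearMap.id :=
  Nat.leRec_self _ _

theorem invDown_succ {n m : ℕ} (h1 : n ≤ m) (h2 : n ≤ m + 1) :
    invDown f h2 = (invDown f h1).comp (f m) :=
  Nat.leRec_succ _ _ h1

theorem invDown_succ_bot {n m : ℕ} (h : n + 1 ≤ m) :
    invDown f (Nat.le_of_succ_le h) = (f n).comp (invDown f h) := by
  induction m, h using Nat.le_induction with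
  | base => rw [invDown_succ f (le_refl n), invDown_refl, invDown_refl]; rfl
  | succ m h ih =>
    rw [invDown_succ f (Nat.le_of_succ_le h), ih, invDown_succ f h]
    rfl

theorem invDown_surjective (hs : ∀ n, Function.Surjective (f n)) {n m : ℕ} (h : n ≤ m) :
    Function.Surjective (invDown f h) := by
  induction m, h using Nat.le_induction with
  | base => rw [invDown_refl]; exact fun a => ⟨a, rfl⟩
  | succ m h ih =>
    rw [invDown_succ f h]
    exact ih.comp (hs m)

theorem invDown_apply_invLimit {x : ∀ n, F n} (hx : x ∈ invLimit F f) {n m : ℕ} (h : n ≤ m) :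
    invDown f h (x m) = x n := by
  induction m, h using Nat.le_induction with
  | base => rw [invDown_refl]; rfl
  | succ m h ih =>
    rw [invDown_succ f h]
    simp only [LinearMap.comp_apply, hx m]
    exact ih

/-- Mittag-Leffler-type lemma: an inverse limit of nonempty subsets of the finite modules
`F n`, stable under the transition maps, contains a point. -/
theorem invLimit_exists_of_nonempty [∀ n, Finite (F n)] (S : ∀ n, Set (F n))
    (hne : ∀ n, (S n).Nonempty) (hcl : ∀ n z, z ∈ S (n + 1) → f n z ∈ S n) :
    ∃ x ∈ invLimit F f, ∀ n, x n ∈ S n := by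
  have : ∀ n, Nonempty (S n) := fun n => (hne n).to_subtype
  let G : ℕᵒᵖ ⥤ Type _ := CategoryTheory.Functor.ofOpSequence
    (X := fun n => S n) (fun n => TypeCat.ofHom (fun (z : S (n + 1)) => (⟨f n z.1, hcl n z.1 z.2⟩ : S n)))
  haveI : ∀ j : ℕᵒᵖ, Finite (G.obj j) := fun j => inferInstanceAs (Finite (S j.unop))
  haveI : ∀ j : ℕᵒᵖ, Nonempty (G.obj j) := fun j => inferInstanceAs (Nonempty (S j.unop))
  obtain ⟨s, hs⟩ := nonempty_sections_of_finite_inverse_system G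
  refine ⟨fun n => (s (Opposite.op n)).1, fun n => ?_, fun n => (s (Opposite.op n)).2⟩
  have := hs (f := (CategoryTheory.homOfLE (Nat.le_add_right n 1)).op)
  rw [CategoryTheory.Functor.ofOpSequence_map_homOfLE_succ] at this
  exact congrArg Subtype.val this

end


/-- Let `ℓ` be a prime and let `(F n, f n)` be an `ℓ`-adic system of `ℤ_ℓ`-modules, with
inverse limit `M = lim F n`.  Then for each `n` the canonical projection `M → F n` is
surjective with kernel `ℓ^(n+1) • M`; consequently it induces an isomorphism
`M / ℓ^(n+1) M ≅ F n`, and these isomorphisms commute with the transition maps `f n` on one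
side and the canonical quotient maps `M / ℓ^(n+2) M → M / ℓ^(n+1) M` on the other. -/
theorem invLimitProj_surjective_ker_and_iso (ℓ : ℕ) [Fact (Nat.Prime ℓ)] (F : ℕ → Type*)
    [∀ n, AddCommGroup (F n)] [∀ n, Module (PadicInt ℓ) (F n)]
    (f : ∀ n, F (n + 1) →ₗ[PadicInt ℓ] F n)
    (hfin : ∀ n, IsFiniteLength (PadicInt ℓ) (F n))
    (hann : ∀ n, ∀ x : F n, ((ℓ : PadicInt ℓ) ^ (n + 1)) • x = 0)
    (hsurj : ∀ n, Function.Surjective (f n))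
    (hker : ∀ n, LinearMap.ker (f n) =
      ((ℓ : PadicInt ℓ) ^ (n + 1)) • (⊤ : Submodule (PadicInt ℓ) (F (n + 1)))) :
    -- each projection is surjective
    (∀ n, Function.Surjective (invLimitProj F f n)) ∧
    -- each projection has kernel `ℓ^(n+1) • M`
    (∀ n, LinearMap.ker (invLimitProj F f n) =
      ((ℓ : PadicInt ℓ) ^ (n + 1)) • (⊤ : Submodule (PadicInt ℓ) (invLimit F f))) ∧
    -- the induced isomorphisms `M / ℓ^(n+1) M ≅ F n` commute with the transition maps
    ∃ e : ∀ n, ((invLimit F f) ⧸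
        (((ℓ : PadicInt ℓ) ^ (n + 1)) • (⊤ : Submodule (PadicInt ℓ) (invLimit F f))))
        ≃ₗ[PadicInt ℓ] F n,
      (∀ n (x : invLimit F f), e n (Submodule.Quotient.mk x) = invLimitProj F f n x) ∧
      (∀ n (x : invLimit F f),
        f n (e (n + 1) (Submodule.Quotient.mk x)) = e n (Submodule.Quotient.mk x)) := by
  haveI hF : ∀ n, Finite (F n) := fun n =>
    finite_of_isFiniteLength' (fun Q _ _ hs => padicSimpleFinite ℓ Q hs) (hfin n)
  -- divisibility from vanishing of the composite transition map
  have hdiv : ∀ (n m : ℕ) (h : n ≤ m) (z : F m), invDown f h z = 0 →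
      ∃ w : F m, ((ℓ : PadicInt ℓ) ^ (n + 1)) • w = z := by
    intro n m h
    induction m, h using Nat.le_induction with
    | base =>
      intro z hz
      rw [invDown_refl] at hz
      exact ⟨0, by simpa using hz.symm⟩
    | succ m h ih =>
      intro z hz
      rw [invDown_succ f h, LinearMap.comp_apply] at hz
      obtain ⟨w, hw⟩ := ih (f m z) hz
      obtain ⟨w', hw'⟩ := hsurj m w
      have hzker : z - ((ℓ : PadicInt ℓ) ^ (n + 1)) • w' ∈ LinearMap.ker (f m) := by
        rw [LinearMap.mem_ker, map_sub, map_smul, hw', hw, sub_self]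
      rw [hker m, mem_smul_top_iff'] at hzker
      obtain ⟨v, hv⟩ := hzker
      refine ⟨w' + (ℓ : PadicInt ℓ) ^ (m - n) • v, ?_⟩
      have hmn : m + 1 = (n + 1) + (m - n) := by omega
      calc ((ℓ : PadicInt ℓ) ^ (n + 1)) • (w' + (ℓ : PadicInt ℓ) ^ (m - n) • v)
          = ((ℓ : PadicInt ℓ) ^ (n + 1)) • w' + ((ℓ : PadicInt ℓ) ^ (m + 1)) • v := by
            rw [smul_add, smul_smul, ← pow_add, ← hmn]
        _ = z := by rw [hv]; abel
  -- surjectivity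
  have hSurj : ∀ n, Function.Surjective (invLimitProj F f n) := by
    intro n a
    set S : ∀ k, Set (F k) := fun k =>
      {z | (∀ h : n ≤ k, invDown f h z = a) ∧ (∀ h : k ≤ n, invDown f h a = z)} with hSdef
    have hne : ∀ k, (S k).Nonempty := by
      intro k
      rcases le_total k n with h | h
      · refine ⟨invDown f h a, fun h' => ?_, fun h'' => rfl⟩
        obtain rfl := le_antisymm h h'
        rw [invDown_refl]; rfl
      · obtain ⟨z, hz⟩ := invDown_surjective f hsurj h a
        refine ⟨z, fun h' => hz, fun h'' => ?_⟩
        obtain rfl := le_antisymm h'' h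
        rw [invDown_refl f h] at hz
        rw [invDown_refl]
        exact hz.symm
    have hcl : ∀ k z, z ∈ S (k + 1) → f k z ∈ S k := by
      intro k z hz
      constructor
      · intro h
        have h1 := hz.1 (Nat.le_succ_of_le h)
        rw [invDown_succ f h] at h1
        exact h1
      · intro h
        rcases Nat.lt_or_ge k n with hk | hk
        · have h1 : k + 1 ≤ n := hk
          have h2 := congrArg (f k) (hz.2 h1)
          rw [← LinearMap.comp_apply, ← invDown_succ_bot f h1] at h2
          exact h2
        · obtain rfl := le_antisymm h hk
          have h1 := hz.1 (Nat.le_succ k)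
          rw [invDown_succ f (le_refl k), invDown_refl] at h1
          rw [invDown_refl]
          simpa using h1.symm
    obtain ⟨x, hx, hxS⟩ := invLimit_exists_of_nonempty f S hne hcl
    refine ⟨⟨x, hx⟩, ?_⟩
    have h1 := (hxS n).1 (le_refl n)
    rw [invDown_refl] at h1
    exact h1
  -- kernel
  have hKer : ∀ n, LinearMap.ker (invLimitProj F f n) =
      ((ℓ : PadicInt ℓ) ^ (n + 1)) • (⊤ : Submodule (PadicInt ℓ) (invLimit F f)) := by
    intro n
    apply le_antisymm
    · intro x hx
      have hxn : x.1 n = 0 := hx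
      set S : ∀ k, Set (F k) := fun k =>
        {z | ((ℓ : PadicInt ℓ) ^ (n + 1)) • z = x.1 k} with hSdef
      have hne : ∀ k, (S k).Nonempty := by
        intro k
        rcases le_total k n with h | h
        · refine ⟨0, ?_⟩
          have h1 := invDown_apply_invLimit f x.2 h
          rw [hxn, map_zero] at h1
          show ((ℓ : PadicInt ℓ) ^ (n + 1)) • (0 : F k) = x.1 k
          rw [smul_zero]; exact h1
        · have h1 := invDown_apply_invLimit f x.2 h
          rw [hxn] at h1
          exact hdiv n k h (x.1 k) h1
      have hcl : ∀ k z, z ∈ S (k + 1) → f k z ∈ S k := by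
        intro k z hz
        show ((ℓ : PadicInt ℓ) ^ (n + 1)) • f k z = x.1 k
        rw [← map_smul, hz, x.2 k]
      obtain ⟨y, hy, hyS⟩ := invLimit_exists_of_nonempty f S hne hcl
      rw [mem_smul_top_iff']
      exact ⟨⟨y, hy⟩, Subtype.ext (funext fun k => hyS k)⟩
    · intro x hx
      rw [mem_smul_top_iff'] at hx
      obtain ⟨y, rfl⟩ := hx
      rw [LinearMap.mem_ker, map_smul]
      exact hann n _
  refine ⟨hSurj, hKer, ?_⟩
  let φ : ∀ n, ((invLimit F f) ⧸
      (((ℓ : PadicInt ℓ) ^ (n + 1)) • (⊤ : Submodule (PadicInt ℓ) (invLimit F f))))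
      →ₗ[PadicInt ℓ] F n := fun n =>
    Submodule.liftQ _ (invLimitProj F f n) (le_of_eq (hKer n).symm)
  have hφ : ∀ n (x : invLimit F f), φ n (Submodule.Quotient.mk x) = invLimitProj F f n x :=
    fun n x => Submodule.liftQ_apply _ _ _
  have hbij : ∀ n, Function.Bijective (φ n) := by
    intro n
    constructor
    · rw [← LinearMap.ker_eq_bot]
      exact Submodule.ker_liftQ_eq_bot _ _ _ (le_of_eq (hKer n))
    · intro a
      obtain ⟨x, hx⟩ := hSurj n a
      exact ⟨Submodule.Quotient.mk x, by rw [hφ]; exact hx⟩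
  refine ⟨fun n => LinearEquiv.ofBijective (φ n) (hbij n), fun n x => ?_, fun n x => ?_⟩
  · rw [LinearEquiv.ofBijective_apply, hφ]
  · rw [LinearEquiv.ofBijective_apply, LinearEquiv.ofBijective_apply, hφ, hφ]
    exact x.2 n
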